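/- For a tiled matrix of size p × q with p > q > 1, the critical path length of the tiled FlatTree algorithm (with TT kernels) equals 6p + 16q − 22. -/

import Mathlib

namespace TiledQR

/-- An elimination `elim(i, piv, k)`: tile `(i, k)` is zeroed out by an orthogonal
transformation combining row `i` with pivot row `piv`. -/
structure Elim where
  i : ℕ
  piv : ℕ
  k : ℕ
deriving DecidableEq

/-- `Before L e f` : the elimination `e` occurs strictly before `f` in the list `L`. -/
def Before (L : List Elim) (e f : Elim) : Prop :=
  ∃ a b : Fin L.length, (a : ℕ) < b ∧ L.get a = e ∧ L.get b = f

/-- `L` is a valid elimination list for a `p × q` tiled matrix: it contains exactly one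
elimination for every sub-diagonal tile `(i, k)` (`1 ≤ k ≤ min p q`, `k < i ≤ p`);
every elimination `elim(i, piv, k)` comes after all eliminations `elim(i, *, k')` and
`elim(piv, *, k')` with `k' < k`, and before the elimination `elim(piv, *, k)` of its
pivot row. -/
def ValidElimList (p q : ℕ) (L : List Elim) : Prop :=
  L.Nodup ∧
  (∀ e ∈ L, 1 ≤ e.k ∧ e.k ≤ min p q ∧ e.k < e.i ∧ e.i ≤ p ∧
      1 ≤ e.piv ∧ e.piv ≤ p ∧ e.piv ≠ e.i) ∧
  (∀ i k, 1 ≤ k → k ≤ min p q → k < i → i ≤ p → ∃! piv, Elim.mk i piv k ∈ L) ∧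
  (∀ a b : Fin L.length, (L.get b).k < (L.get a).k →
      ((L.get b).i = (L.get a).i ∨ (L.get b).i = (L.get a).piv) → (b : ℕ) < a) ∧
  (∀ a b : Fin L.length, (L.get b).k = (L.get a).k →
      (L.get b).i = (L.get a).piv → (a : ℕ) < b)

/-- The tasks of the tiled QR factorization with TT (triangle-on-top-of-triangle)
kernels. -/
inductive Task where
  | GEQRT (r k : ℕ)
  | UNMQR (r k j : ℕ)
  | TTQRT (i piv k : ℕ)
  | TTMQR (i piv k j : ℕ)
deriving DecidableEq

/-- Weights of the TT kernels, the unit being `n_b ^ 3 / 3` flops. -/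
def weight : Task → ℕ
  | .GEQRT _ _ => 4
  | .UNMQR _ _ _ => 6
  | .TTQRT _ _ _ => 2
  | .TTMQR _ _ _ _ => 6

/-- The tasks associated with a `p × q` tiled matrix and an elimination list `L`:
a factorization `GEQRT(r, k)` and updates `UNMQR(r, k, j)` (`k < j ≤ q`) for every tile
`(r, k)` with `k ≤ r ≤ p`, and, for every elimination `elim(i, piv, k)` of `L`, a task
`TTQRT(i, piv, k)` and updates `TTMQR(i, piv, k, j)` for `k < j ≤ q`. -/
def InTasks (p q : ℕ) (L : List Elim) : Task → Prop
  | .GEQRT r k => 1 ≤ k ∧ k ≤ min p q ∧ k ≤ r ∧ r ≤ p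
  | .UNMQR r k j => 1 ≤ k ∧ k ≤ min p q ∧ k ≤ r ∧ r ≤ p ∧ k < j ∧ j ≤ q
  | .TTQRT i piv k => Elim.mk i piv k ∈ L
  | .TTMQR i piv k j => Elim.mk i piv k ∈ L ∧ k < j ∧ j ≤ q

/-- The precedence (dependence) relation between the TT tasks.  Besides the flow
dependencies of the kernels, two tasks reading and writing a common tile
(a pivot tile reused by several eliminations of a column, or a pivot tile that is
subsequently zeroed out) are serialized in the order of the elimination list. -/
inductive Prec (L : List Elim) : Task → Task → Prop
  | geqrt_unmqr (r k j : ℕ) :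
      Prec L (.GEQRT r k) (.UNMQR r k j)
  | geqrt_ttqrt_row (i piv k : ℕ) :
      Prec L (.GEQRT i k) (.TTQRT i piv k)
  | geqrt_ttqrt_piv (i piv k : ℕ) :
      Prec L (.GEQRT piv k) (.TTQRT i piv k)
  | ttqrt_ttmqr (i piv k j : ℕ) :
      Prec L (.TTQRT i piv k) (.TTMQR i piv k j)
  | unmqr_ttmqr_row (i piv k j : ℕ) :
      Prec L (.UNMQR i k j) (.TTMQR i piv k j)
  | unmqr_ttmqr_piv (i piv k j : ℕ) :
      Prec L (.UNMQR piv k j) (.TTMQR i piv k j)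
  | ttmqr_geqrt (a b i k : ℕ) : 2 ≤ k → (a = i ∨ b = i) →
      Prec L (.TTMQR a b (k - 1) k) (.GEQRT i k)
  | ttqrt_serial (i i' piv k : ℕ) :
      Before L (Elim.mk i piv k) (Elim.mk i' piv k) →
      Prec L (.TTQRT i piv k) (.TTQRT i' piv k)
  | ttmqr_serial (i i' piv k j : ℕ) :
      Before L (Elim.mk i piv k) (Elim.mk i' piv k) →
      Prec L (.TTMQR i piv k j) (.TTMQR i' piv k j)
  | ttqrt_pivot_use (a i piv k : ℕ) :
      Prec L (.TTQRT a i k) (.TTQRT i piv k)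
  | ttmqr_pivot_use (a i piv k j : ℕ) :
      Prec L (.TTMQR a i k j) (.TTMQR i piv k j)

/-- A path in the weighted task DAG. -/
def IsPath (p q : ℕ) (L : List Elim) (path : List Task) : Prop :=
  (∀ t ∈ path, InTasks p q L t) ∧ path.Chain' (Prec L)

/-- The critical path length of the tiled algorithm given by the elimination list `L`:
the maximum total weight of a path in the weighted task DAG (equivalently, the makespan
of the earliest-start schedule with unboundedly many processors). -/
noncomputable def cpLength (p q : ℕ) (L : List Elim) : ℕ :=
  sSup { w : ℕ | ∃ path : List Task, IsPath p q L path ∧ w = (path.map weight).sum }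
/-- The FlatTree (Sameh-Kuck) elimination list: all eliminations of column `k` use the
diagonal row `k` as pivot; eliminations are listed column by column and, within a
column, by increasing row index. -/
def flatTreeList (p q : ℕ) : List Elim :=
  (List.range' 1 (min p q)).flatMap fun k =>
    (List.range' (k + 1) (p - k)).map fun i => Elim.mk i k k
/- ===== auxiliary development ===== -/

lemma mem_flatTreeList {p q i piv k : ℕ} :
    Elim.mk i piv k ∈ flatTreeList p q ↔
      piv = k ∧ 1 ≤ k ∧ k ≤ min p q ∧ k < i ∧ i ≤ p := by
  simp only [flatTreeList, List.mem_flatMap, List.mem_map, List.mem_range']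
  constructor
  · rintro ⟨k', ⟨a, ha, hk'⟩, i', ⟨b, hb, hi'⟩, heq⟩
    injection heq with h1 h2 h3
    subst h1; subst h2; subst h3
    omega
  · rintro ⟨h0, h1, h2, h3, h4⟩
    exact ⟨k, ⟨k - 1, by omega, by omega⟩, i, ⟨i - k - 1, by omega, by omega⟩,
      by rw [h0]⟩

/-- The FlatTree list is sorted lexicographically by `(k, i)`. -/
lemma flatTree_pairwise (p q : ℕ) :
    (flatTreeList p q).Pairwise (fun e f => e.k < f.k ∨ (e.k = f.k ∧ e.i < f.i)) := by
  have hdef : flatTreeList p q =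
      ((List.range' 1 (min p q)).map fun k =>
        (List.range' (k + 1) (p - k)).map fun i => Elim.mk i k k).flatten := by
    simp [flatTreeList, List.flatMap_def]
  rw [hdef, List.pairwise_flatten]
  constructor
  · intro l hl
    simp only [List.mem_map] at hl
    obtain ⟨k, _, rfl⟩ := hl
    rw [List.pairwise_map]
    exact (List.pairwise_lt_range').imp (fun h => Or.inr ⟨rfl, h⟩)
  · rw [List.pairwise_map]
    refine (List.pairwise_lt_range').imp ?_
    intro k k' hkk' x hx y hy
    simp only [List.mem_map] at hx hy
    obtain ⟨i, _, rfl⟩ := hx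
    obtain ⟨i', _, rfl⟩ := hy
    exact Or.inl hkk'

lemma before_flatTree {p q : ℕ} {e f : Elim} (h : Before (flatTreeList p q) e f) :
    e ∈ flatTreeList p q ∧ f ∈ flatTreeList p q ∧
      (e.k < f.k ∨ (e.k = f.k ∧ e.i < f.i)) := by
  obtain ⟨a, b, hab, ha, hb⟩ := h
  refine ⟨ha ▸ List.get_mem _ _, hb ▸ List.get_mem _ _, ?_⟩
  have := List.pairwise_iff_get.mp (flatTree_pairwise p q) a b (by exact hab)
  rwa [ha, hb] at this

/-- Build a `Before` witness from membership and lexicographic order. -/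
lemma before_of_mem {p q : ℕ} {e f : Elim}
    (he : e ∈ flatTreeList p q) (hf : f ∈ flatTreeList p q)
    (h : e.k < f.k ∨ (e.k = f.k ∧ e.i < f.i)) : Before (flatTreeList p q) e f := by
  obtain ⟨a, ha⟩ := List.get_of_mem he
  obtain ⟨b, hb⟩ := List.get_of_mem hf
  rcases lt_trichotomy (a : ℕ) (b : ℕ) with hlt | heq | hgt
  · exact ⟨a, b, hlt, ha, hb⟩
  · exfalso
    have : a = b := Fin.ext heq
    subst this
    rw [ha] at hb; subst hb
    omega
  · exfalso
    have := List.pairwise_iff_get.mp (flatTree_pairwise p q) b a (by exact hgt)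
    rw [ha, hb] at this
    omega

/-- The potential function: an upper bound on the completion time of each task. -/
def phi : Task → ℕ
  | .GEQRT r k => if k = 1 then 4 else 6 * r + 16 * k - 24
  | .UNMQR r k _ => if k = 1 then 10 else 6 * r + 16 * k - 18
  | .TTQRT i _ k => if k = 1 then 2 * i + 2 else 6 * i + 16 * k - 22
  | .TTMQR i _ k _ => 6 * i + 16 * k - 12

lemma weight_le_phi {p q : ℕ} {t : Task} (ht : InTasks p q (flatTreeList p q) t) :
    weight t ≤ phi t := by
  cases t with
  | GEQRT r k =>
    simp only [InTasks] at ht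
    simp only [weight, phi]; split_ifs <;> omega
  | UNMQR r k j =>
    simp only [InTasks] at ht
    simp only [weight, phi]; split_ifs <;> omega
  | TTQRT i piv k =>
    simp only [InTasks] at ht
    have := mem_flatTreeList.mp ht
    simp only [weight, phi]; split_ifs <;> omega
  | TTMQR i piv k j =>
    simp only [InTasks] at ht
    have := mem_flatTreeList.mp ht.1
    simp only [weight, phi]; omega

lemma phi_le_bound {p q : ℕ} (hq : 1 < q) (hpq : q < p) {t : Task}
    (ht : InTasks p q (flatTreeList p q) t) : phi t ≤ 6 * p + 16 * q - 22 := by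
  cases t with
  | GEQRT r k =>
    simp only [InTasks] at ht
    simp only [phi]; split_ifs <;> omega
  | UNMQR r k j =>
    simp only [InTasks] at ht
    simp only [phi]; split_ifs <;> omega
  | TTQRT i piv k =>
    simp only [InTasks] at ht
    have := mem_flatTreeList.mp ht
    simp only [phi]; split_ifs <;> omega
  | TTMQR i piv k j =>
    simp only [InTasks] at ht
    have := mem_flatTreeList.mp ht.1
    simp only [phi]; omega

lemma phi_step {p q : ℕ} {t t' : Task}
    (ht : InTasks p q (flatTreeList p q) t) (ht' : InTasks p q (flatTreeList p q) t')
    (h : Prec (flatTreeList p q) t t') : phi t + weight t' ≤ phi t' := by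
  cases h with
  | geqrt_unmqr r k j =>
    simp only [InTasks] at ht ht'
    simp only [phi, weight]; split_ifs <;> omega
  | geqrt_ttqrt_row i piv k =>
    simp only [InTasks] at ht ht'
    have := mem_flatTreeList.mp ht'
    simp only [phi, weight]; split_ifs <;> omega
  | geqrt_ttqrt_piv i piv k =>
    simp only [InTasks] at ht ht'
    have := mem_flatTreeList.mp ht'
    simp only [phi, weight]; split_ifs <;> omega
  | ttqrt_ttmqr i piv k j =>
    simp only [InTasks] at ht ht'
    have := mem_flatTreeList.mp ht
    simp only [phi, weight]; split_ifs <;> omega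
  | unmqr_ttmqr_row i piv k j =>
    simp only [InTasks] at ht ht'
    have := mem_flatTreeList.mp ht'.1
    simp only [phi, weight]; split_ifs <;> omega
  | unmqr_ttmqr_piv i piv k j =>
    simp only [InTasks] at ht ht'
    have := mem_flatTreeList.mp ht'.1
    simp only [phi, weight]; split_ifs <;> omega
  | ttmqr_geqrt a b i k h2 hab =>
    simp only [InTasks] at ht ht'
    have hm := mem_flatTreeList.mp ht.1
    simp only [phi, weight]; split_ifs <;> omega
  | ttqrt_serial i i' piv k hbef =>
    obtain ⟨h1, h2, h3⟩ := before_flatTree hbef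
    have m1 := mem_flatTreeList.mp h1
    have m2 := mem_flatTreeList.mp h2
    simp only [phi, weight]; split_ifs <;> simp only at h3 <;> omega
  | ttmqr_serial i i' piv k j hbef =>
    obtain ⟨h1, h2, h3⟩ := before_flatTree hbef
    have m1 := mem_flatTreeList.mp h1
    have m2 := mem_flatTreeList.mp h2
    simp only at h3
    simp only [phi, weight]; omega
  | ttqrt_pivot_use a i piv k =>
    simp only [InTasks] at ht ht'
    have m1 := mem_flatTreeList.mp ht
    have m2 := mem_flatTreeList.mp ht'
    omega
  | ttmqr_pivot_use a i piv k j =>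
    simp only [InTasks] at ht ht'
    have m1 := mem_flatTreeList.mp ht.1
    have m2 := mem_flatTreeList.mp ht'.1
    omega

lemma chain_sum_le {p q : ℕ} (hq : 1 < q) (hpq : q < p) :
    ∀ (path : List Task) (t : Task),
      (∀ s ∈ t :: path, InTasks p q (flatTreeList p q) s) →
      List.Chain (Prec (flatTreeList p q)) t path →
      phi t + (path.map weight).sum ≤ 6 * p + 16 * q - 22 := by
  intro path
  induction path with
  | nil =>
    intro t hmem _
    simpa using phi_le_bound hq hpq (hmem t (by simp))
  | cons u rest ih =>
    intro t hmem hchain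
    simp only [List.Chain] at hchain
    rw [List.isChain_cons_cons] at hchain
    have hstep := phi_step (hmem t (by simp)) (hmem u (by simp)) hchain.1
    have := ih u (fun s hs => hmem s (by simp at hs ⊢; tauto)) hchain.2
    simp only [List.map_cons, List.sum_cons]
    omega

lemma path_sum_le {p q : ℕ} (hq : 1 < q) (hpq : q < p) {path : List Task}
    (h : IsPath p q (flatTreeList p q) path) :
    (path.map weight).sum ≤ 6 * p + 16 * q - 22 := by
  obtain ⟨hmem, hchain⟩ := h
  cases path with
  | nil => simp
  | cons t rest =>
    have h1 := weight_le_phi (hmem t (by simp))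
    have h2 := chain_sum_le hq hpq rest t hmem hchain
    simp only [List.map_cons, List.sum_cons]
    omega

lemma path_extend {p q : ℕ} {L : List Elim} {path : List Task} {t u : Task}
    (h : IsPath p q L path) (hlast : path.getLast? = some t)
    (hu : InTasks p q L u) (htu : Prec L t u) :
    IsPath p q L (path ++ [u]) ∧ (path ++ [u]).getLast? = some u ∧
      ((path ++ [u]).map weight).sum = (path.map weight).sum + weight u := by
  obtain ⟨hmem, hchain⟩ := h
  refine ⟨⟨?_, ?_⟩, ?_, ?_⟩
  · intro s hs
    rcases List.mem_append.mp hs with hs | hs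
    · exact hmem s hs
    · simp at hs; subst hs; exact hu
  · simp only [List.Chain']
    rw [List.isChain_append]
    refine ⟨hchain, List.isChain_singleton u, ?_⟩
    intro x hx y hy
    rw [hlast] at hx
    simp at hx hy
    subst hx; subst hy
    exact htu
  · simp
  · simp

lemma stage1 {p q : ℕ} (hq : 1 < q) (hpq : q < p) :
    ∀ i, 2 ≤ i → i ≤ p → ∃ path : List Task,
      IsPath p q (flatTreeList p q) path ∧
      path.getLast? = some (.TTMQR i 1 1 2) ∧
      (path.map weight).sum = 6 * i + 4 := by
  intro i
  induction i with
  | zero => omega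
  | succ n ih =>
    intro h2 hp
    rcases Nat.lt_or_ge 2 (n + 1) with hgt | hle
    · -- n + 1 ≥ 3, extend from n
      obtain ⟨path, hpath, hlast, hsum⟩ := ih (by omega) (by omega)
      have hmem1 : Elim.mk n 1 1 ∈ flatTreeList p q :=
        mem_flatTreeList.mpr ⟨rfl, le_refl _, by omega, by omega, by omega⟩
      have hmem2 : Elim.mk (n + 1) 1 1 ∈ flatTreeList p q :=
        mem_flatTreeList.mpr ⟨rfl, le_refl _, by omega, by omega, by omega⟩
      have hbef : Before (flatTreeList p q) (Elim.mk n 1 1) (Elim.mk (n + 1) 1 1) :=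
        before_of_mem hmem1 hmem2 (Or.inr ⟨rfl, Nat.lt_succ_self n⟩)
      have hu : InTasks p q (flatTreeList p q) (.TTMQR (n + 1) 1 1 2) :=
        ⟨hmem2, by omega, by omega⟩
      obtain ⟨h1, h2', h3⟩ := path_extend hpath hlast hu
        (Prec.ttmqr_serial n (n + 1) 1 1 2 hbef)
      exact ⟨_, h1, h2', by simp only [h3, hsum, weight]; omega⟩
    · -- base case : n + 1 = 2
      have hn : n = 1 := by omega
      subst hn
      refine ⟨[.GEQRT 1 1, .UNMQR 1 1 2, .TTMQR 2 1 1 2], ⟨?_, ?_⟩, ?_, ?_⟩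
      · intro s hs
        simp only [List.mem_cons, List.not_mem_nil, or_false] at hs
        rcases hs with rfl | rfl | rfl
        · exact ⟨le_refl _, by omega, le_refl _, by omega⟩
        · exact ⟨le_refl _, by omega, le_refl _, by omega, by omega, by omega⟩
        · exact ⟨mem_flatTreeList.mpr ⟨rfl, le_refl _, by omega, by omega, by omega⟩,
            by omega, by omega⟩
      · simp only [List.Chain']
        rw [List.isChain_cons_cons, List.isChain_cons_cons]
        exact ⟨Prec.geqrt_unmqr 1 1 2, Prec.unmqr_ttmqr_piv 2 1 1 2,
          List.isChain_singleton _⟩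
      · rfl
      · simp [weight]

lemma stage2 {p q : ℕ} (hq : 1 < q) (hpq : q < p) :
    ∀ k, 1 ≤ k → k + 1 ≤ q → ∃ path : List Task,
      IsPath p q (flatTreeList p q) path ∧
      path.getLast? = some (.TTMQR p k k (k + 1)) ∧
      (path.map weight).sum = 6 * p + 16 * k - 12 := by
  intro k
  induction k with
  | zero => omega
  | succ n ih =>
    intro _ hkq
    rcases Nat.eq_zero_or_pos n with rfl | hn
    · -- base : k = 1
      obtain ⟨path, hpath, hlast, hsum⟩ := stage1 hq hpq p (by omega) (le_refl _)
      exact ⟨path, hpath, hlast, by omega⟩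
    · -- step : from column n to column n + 1
      obtain ⟨path, hpath, hlast, hsum⟩ := ih (by omega) (by omega)
      -- extend with GEQRT p (n+1)
      have hG : InTasks p q (flatTreeList p q) (.GEQRT p (n + 1)) :=
        ⟨by omega, by omega, by omega, le_refl _⟩
      have hprecG : Prec (flatTreeList p q) (.TTMQR p n n (n + 1)) (.GEQRT p (n + 1)) := by
        have := Prec.ttmqr_geqrt (L := flatTreeList p q) p n p (n + 1)
          (by omega) (Or.inl rfl)
        simpa using this
      obtain ⟨h1, h2, h3⟩ := path_extend hpath hlast hG hprecG
      -- extend with UNMQR p (n+1) (n+2)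
      have hU : InTasks p q (flatTreeList p q) (.UNMQR p (n + 1) (n + 2)) :=
        ⟨by omega, by omega, by omega, le_refl _, by omega, by omega⟩
      obtain ⟨h4, h5, h6⟩ := path_extend h1 h2 hU (Prec.geqrt_unmqr p (n + 1) (n + 2))
      -- extend with TTMQR p (n+1) (n+1) (n+2)
      have hmemE : Elim.mk p (n + 1) (n + 1) ∈ flatTreeList p q :=
        mem_flatTreeList.mpr ⟨rfl, by omega, by omega, by omega, le_refl _⟩
      have hT : InTasks p q (flatTreeList p q) (.TTMQR p (n + 1) (n + 1) (n + 2)) :=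
        ⟨hmemE, by omega, by omega⟩
      obtain ⟨h7, h8, h9⟩ := path_extend h4 h5 hT
        (Prec.unmqr_ttmqr_row p (n + 1) (n + 1) (n + 2))
      refine ⟨_, h7, h8, ?_⟩
      rw [h9, h6, h3, hsum]
      simp only [weight]
      omega

lemma exists_critical_path {p q : ℕ} (hq : 1 < q) (hpq : q < p) :
    ∃ path : List Task, IsPath p q (flatTreeList p q) path ∧
      (path.map weight).sum = 6 * p + 16 * q - 22 := by
  obtain ⟨path, hpath, hlast, hsum⟩ := stage2 hq hpq (q - 1) (by omega) (by omega)
  have hq1 : q - 1 + 1 = q := by omega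
  rw [hq1] at hlast
  -- extend with GEQRT p q
  have hG : InTasks p q (flatTreeList p q) (.GEQRT p q) :=
    ⟨by omega, by omega, by omega, le_refl _⟩
  have hprecG : Prec (flatTreeList p q) (.TTMQR p (q - 1) (q - 1) q) (.GEQRT p q) := by
    have := Prec.ttmqr_geqrt (L := flatTreeList p q) p (q - 1) p q (by omega) (Or.inl rfl)
    simpa using this
  obtain ⟨h1, h2, h3⟩ := path_extend hpath hlast hG hprecG
  -- extend with TTQRT p q q
  have hmemE : Elim.mk p q q ∈ flatTreeList p q :=
    mem_flatTreeList.mpr ⟨rfl, by omega, by omega, by omega, le_refl _⟩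
  have hQ : InTasks p q (flatTreeList p q) (.TTQRT p q q) := hmemE
  obtain ⟨h4, h5, h6⟩ := path_extend h1 h2 hQ (Prec.geqrt_ttqrt_row p q q)
  refine ⟨_, h4, ?_⟩
  rw [h6, h3, hsum]
  simp only [weight]
  omega

/-- **Theorem 2 (1), case `p > q > 1`.** The critical path length of the tiled
FlatTree algorithm (with TT kernels) on a `p × q` matrix with `p > q > 1` is
`6p + 16q - 22`. -/
theorem flatTree_cpLength_rect (p q : ℕ) (hq : 1 < q) (hpq : q < p) :
    cpLength p q (flatTreeList p q) = 6 * p + 16 * q - 22 := by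
  obtain ⟨path, hpath, hsum⟩ := exists_critical_path hq hpq
  have hmem : (6 * p + 16 * q - 22) ∈
      { w : ℕ | ∃ path : List Task,
        IsPath p q (flatTreeList p q) path ∧ w = (path.map weight).sum } :=
    ⟨path, hpath, hsum.symm⟩
  have hub : ∀ w ∈ { w : ℕ | ∃ path : List Task,
      IsPath p q (flatTreeList p q) path ∧ w = (path.map weight).sum },
      w ≤ 6 * p + 16 * q - 22 := by
    rintro w ⟨path', hpath', rfl⟩
    exact path_sum_le hq hpq hpath'
  exact le_antisymm (csSup_le ⟨_, hmem⟩ hub) (le_csSup ⟨_, hub⟩ hmem)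

end TiledQR
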